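/- Let I ⊆ ℝ be an open interval, c ∈ ℝ, f : ℝ → ℝ twice differentiable on I with f(t) > 0 on I, and λ : ℝ → ℝ differentiable on I with λ(t) ≠ 0 and f(t)²λ(t)² = f'(t)² − c for all t ∈ I. Let θ : ℝ → ℝ be differentiable on I with tanh(θ(t)) = f'(t)/(f(t)·λ(t)) for all t ∈ I. Then the function t ↦ cosh(θ(t))/λ(t) is differentiable on I and its derivative equals sinh(θ(t)) for all t ∈ I. -/

import Mathlib

/-- With `f²λ² = f'² − c` on the open interval `I` (`f > 0`, `λ ≠ 0`,
`λ` differentiable) and `tanh θ = f'/(f·λ)` for differentiable `θ`, the function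
`cosh θ/λ` is differentiable on `I` with derivative `sinh θ`. -/
theorem stmt_15 (a b c : ℝ) (f f' f'' lam θ : ℝ → ℝ)
    (hf : ∀ t ∈ Set.Ioo a b, HasDerivAt f (f' t) t)
    (hf' : ∀ t ∈ Set.Ioo a b, HasDerivAt f' (f'' t) t)
    (hpos : ∀ t ∈ Set.Ioo a b, 0 < f t)
    (hlamdiff : ∀ t ∈ Set.Ioo a b, DifferentiableAt ℝ lam t)
    (hlam0 : ∀ t ∈ Set.Ioo a b, lam t ≠ 0)
    (hrel : ∀ t ∈ Set.Ioo a b, f t ^ 2 * lam t ^ 2 = f' t ^ 2 - c)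
    (hθdiff : ∀ t ∈ Set.Ioo a b, DifferentiableAt ℝ θ t)
    (htanh : ∀ t ∈ Set.Ioo a b, Real.tanh (θ t) = f' t / (f t * lam t)) :
    ∀ t ∈ Set.Ioo a b,
      HasDerivAt (fun s => Real.cosh (θ s) / lam s) (Real.sinh (θ t)) t := by
  have hflam : ∀ s ∈ Set.Ioo a b, f s * lam s ≠ 0 := fun s hs =>
    mul_ne_zero (hpos s hs).ne' (hlam0 s hs)
  have hderiv : ∀ s ∈ Set.Ioo a b, f' s = Real.tanh (θ s) * (f s * lam s) := by
    intro s hs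
    rw [htanh s hs, div_mul_cancel₀ _ (hflam s hs)]
  have h5 : ∀ s : ℝ, Real.cosh (θ s) ^ 2 * (1 - Real.tanh (θ s) ^ 2) = 1 := by
    intro s
    have hC := (Real.cosh_pos (θ s)).ne'
    have h := Real.cosh_sq_sub_sinh_sq (θ s)
    rw [Real.tanh_eq_sinh_div_cosh]
    field_simp
    exact h
  have key : ∀ s ∈ Set.Ioo a b, Real.cosh (θ s) ^ 2 * (-c) = (f s * lam s) ^ 2 := by
    intro s hs
    linear_combination (-(Real.cosh (θ s)) ^ 2) * (hrel s hs) +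
      (f s * lam s) ^ 2 * h5 s +
      (-(Real.cosh (θ s)) ^ 2 * (f' s + Real.tanh (θ s) * (f s * lam s))) * (hderiv s hs)
  intro t ht
  have hP2 : 0 < (f t * lam t) ^ 2 := pow_two_pos_of_ne_zero (hflam t ht)
  have hC2 : 0 < Real.cosh (θ t) ^ 2 := pow_pos (Real.cosh_pos _) 2
  have hcneg : 0 < -c := by nlinarith [key t ht]
  have hsq : 0 < Real.sqrt (-c) := Real.sqrt_pos.mpr hcneg
  have hcosh : ∀ s ∈ Set.Ioo a b, Real.cosh (θ s) = |f s * lam s| / Real.sqrt (-c) := by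
    intro s hs
    have h2 : Real.cosh (θ s) ^ 2 = (f s * lam s) ^ 2 / (-c) := by
      rw [eq_div_iff hcneg.ne']
      exact key s hs
    calc Real.cosh (θ s) = Real.sqrt (Real.cosh (θ s) ^ 2) :=
          (Real.sqrt_sq (Real.cosh_pos _).le).symm
      _ = Real.sqrt ((f s * lam s) ^ 2 / (-c)) := by rw [h2]
      _ = Real.sqrt ((f s * lam s) ^ 2) / Real.sqrt (-c) := Real.sqrt_div (sq_nonneg _) _
      _ = |f s * lam s| / Real.sqrt (-c) := by rw [Real.sqrt_sq_eq_abs]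
  set σ : ℝ := if 0 < lam t then 1 else -1 with hσdef
  have habs : ∀ s ∈ Set.Ioo a b, (0 < lam t ↔ 0 < lam s) → |lam s| = σ * lam s := by
    intro s hs hiff
    by_cases h : 0 < lam t
    · rw [hσdef, if_pos h, one_mul, abs_of_pos (hiff.mp h)]
    · have : lam s < 0 := lt_of_le_of_ne (not_lt.mp (fun h' => h (hiff.mpr h'))) (hlam0 s hs)
      rw [hσdef, if_neg h, abs_of_neg this]; ring
  -- eventual equality
  have hev : ∀ᶠ s in nhds t, Real.cosh (θ s) / lam s = f s * (σ / Real.sqrt (-c)) := by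
    have hIoo : ∀ᶠ s in nhds t, s ∈ Set.Ioo a b := isOpen_Ioo.eventually_mem ht
    have hcont : ContinuousAt lam t := (hlamdiff t ht).continuousAt
    have hsign : ∀ᶠ s in nhds t, (0 < lam t ↔ 0 < lam s) := by
      by_cases h : 0 < lam t
      · filter_upwards [hcont.eventually (eventually_gt_nhds h)] with s hs
        exact ⟨fun _ => hs, fun _ => h⟩
      · have hlt : lam t < 0 :=
          lt_of_le_of_ne (not_lt.mp h) (hlam0 t ht)
        filter_upwards [hcont.eventually (eventually_lt_nhds hlt)] with s hs
        exact ⟨fun h' => absurd h' h, fun h' => absurd hs (not_lt.mpr h'.le)⟩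
    filter_upwards [hIoo, hsign] with s hs hsgn
    rw [hcosh s hs, abs_mul, abs_of_pos (hpos s hs), habs s hs hsgn]
    field_simp [hlam0 s hs, hsq.ne']
  have hd : HasDerivAt (fun s => f s * (σ / Real.sqrt (-c)))
      (f' t * (σ / Real.sqrt (-c))) t := (hf t ht).mul_const _
  have hd2 := hd.congr_of_eventuallyEq hev
  convert hd2 using 1
  case e'_4 => rfl
  case e'_5 => rfl
  -- sinh θ t = f' t * (σ / √(-c))
  have hsinh : Real.sinh (θ t) = Real.tanh (θ t) * Real.cosh (θ t) := by
    rw [Real.tanh_eq_sinh_div_cosh]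
    field_simp
  rw [hsinh, htanh t ht, hcosh t ht, abs_mul, abs_of_pos (hpos t ht),
    habs t ht (Iff.rfl)]
  field_simp [hlam0 t ht, (hpos t ht).ne', hsq.ne']
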